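/- Let N ≥ 2, 0 < p < 1, 0 < q < p with 1 - 2p + q > 0. Define α = log((p-q)/(1-2p+q)), α₀ = (N-1)·log((1-p)/p) + N·α, β = log(q/(p-q)) - α, and Z = (1+exp α)^N + exp(α₀)·(1+exp(α+β))^N. Then (1/Z) · exp(2α) · (1 + exp α)^{N-2} = (p-q)²/(1-p). -/

import Mathlib

/-- In the Dandelion model with parameters `α = log((p-q)/(1-2p+q))`,
`α₀ = (N-1)log((1-p)/p) + Nα`, `β = log(q/(p-q)) - α` and
`Z = (1+e^α)^N + e^{α₀}(1+e^{α+β})^N`, the contribution of the `l₀ = 0`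
configurations to the joint moment `E[L₁L₂]` of two non-central nodes is
`(1/Z) e^{2α} (1+e^α)^{N-2} = (p-q)²/(1-p)`. -/
theorem dandelion_l0_zero_contribution (N : ℕ) (hN : 2 ≤ N) (p q : ℝ)
    (hp0 : 0 < p) (hp1 : p < 1) (hq0 : 0 < q) (hqp : q < p)
    (hpos : 1 - 2 * p + q > 0)
    (α α₀ β Z : ℝ)
    (hα : α = Real.log ((p - q) / (1 - 2 * p + q)))
    (hα₀ : α₀ = (N - 1 : ℝ) * Real.log ((1 - p) / p) + N * α)
    (hβ : β = Real.log (q / (p - q)) - α)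
    (hZ : Z = (1 + Real.exp α) ^ N + Real.exp α₀ * (1 + Real.exp (α + β)) ^ N) :
    (1 / Z) * Real.exp (2 * α) * (1 + Real.exp α) ^ (N - 2) =
      (p - q) ^ 2 / (1 - p) := by
  obtain ⟨M, rfl⟩ : ∃ M, N = M + 2 := ⟨N - 2, by omega⟩
  have hpq : 0 < p - q := by linarith
  have hA : 0 < 1 - 2 * p + q := hpos
  have h1p : 0 < 1 - p := by linarith
  have heα : Real.exp α = (p - q) / (1 - 2 * p + q) := by
    rw [hα, Real.exp_log (by positivity)]
  have heαβ : Real.exp (α + β) = q / (p - q) := by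
    have : α + β = Real.log (q / (p - q)) := by rw [hβ]; ring
    rw [this, Real.exp_log (by positivity)]
  have heα₀ : Real.exp α₀ =
      ((1 - p) / p) ^ (M + 1) * ((p - q) / (1 - 2 * p + q)) ^ (M + 2) := by
    have h1 : α₀ = ((M + 1 : ℕ) : ℝ) * Real.log ((1 - p) / p) +
        ((M + 2 : ℕ) : ℝ) * α := by rw [hα₀]; push_cast; ring
    rw [h1, Real.exp_add, Real.exp_nat_mul, Real.exp_nat_mul,
      Real.exp_log (by positivity), heα]
  have hsum : 1 + Real.exp α = (1 - p) / (1 - 2 * p + q) := by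
    rw [heα]; field_simp [(by linarith : (0:ℝ) < 1 - p * 2 + q).ne']; ring
  have hsum2 : 1 + Real.exp (α + β) = p / (p - q) := by
    rw [heαβ]; field_simp [hpq.ne']; ring
  have hZval : Z = (1 - p) ^ (M + 1) / (1 - 2 * p + q) ^ (M + 2) := by
    rw [hZ, heα₀, hsum, hsum2, div_pow, div_pow, div_pow]
    field_simp [hA.ne', (by linarith : (0:ℝ) < 1 - p * 2 + q).ne', hpq.ne', hp0.ne', h1p.ne']
    rw [div_pow]
    field_simp
    ring
  have hZpos : 0 < Z := by rw [hZval]; positivity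
  rw [hZval, hsum, Real.exp_eq_exp.mpr (by ring : 2 * α = α + α), Real.exp_add, heα]
  have : M + 2 - 2 = M := by omega
  rw [this, div_pow]
  field_simp [hA.ne', (by linarith : (0:ℝ) < 1 - p * 2 + q).ne', hpq.ne', hp0.ne', h1p.ne']
  ring
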